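/- For every real x > 0: 1/(24x^2) − 1/(24x^3) + 23/(960x^4) − 1/(160x^5) − 11/(8064x^6) − 1/(896x^7) < Ψ(x+1) − ln(x + 1/2) < 1/(24x^2) − 1/(24x^3) + 23/(960x^4) − 1/(160x^5) − 11/(8064x^6) − 1/(896x^7) + 143/(30720x^8), where Ψ is the digamma function. -/

import Mathlib

open Real

/-- The digamma function `Ψ(x) = Γ'(x)/Γ(x) = (log ∘ Γ)'(x)`. -/
noncomputable def digamma (x : ℝ) : ℝ := deriv (fun y : ℝ => Real.log (Real.Gamma y)) x

section Aux

open Real Filter Set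

lemma diffLG {x : ℝ} (hx : 0 < x) :
    DifferentiableAt ℝ (fun y : ℝ => Real.log (Real.Gamma y)) x := by
  have hG : DifferentiableAt ℝ Real.Gamma x :=
    Real.differentiableAt_Gamma (fun m => (lt_of_le_of_lt (neg_nonpos.mpr (Nat.cast_nonneg m)) hx).ne')
  exact hG.log (Real.Gamma_pos_of_pos hx).ne'

lemma digamma_add_one {x : ℝ} (hx : 0 < x) : digamma (x + 1) = digamma x + 1 / x := by
  have h1 : deriv (fun y : ℝ => Real.log (Real.Gamma (y + 1))) x
      = digamma (x + 1) := by
    rw [digamma]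
    exact deriv_comp_add_const (f := fun y : ℝ => Real.log (Real.Gamma y)) 1 x
  have h2 : (fun y : ℝ => Real.log (Real.Gamma (y + 1)))
      =ᶠ[nhds x] fun y => Real.log y + Real.log (Real.Gamma y) := by
    filter_upwards [Ioi_mem_nhds hx] with y hy
    rw [Real.Gamma_add_one (ne_of_gt hy),
      Real.log_mul (ne_of_gt hy) (Real.Gamma_pos_of_pos hy).ne']
  have h3 : deriv (fun y : ℝ => Real.log (Real.Gamma (y + 1))) x
      = deriv (fun y : ℝ => Real.log y + Real.log (Real.Gamma y)) x := h2.deriv_eq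
  rw [deriv_fun_add (Real.differentiableAt_log hx.ne') (diffLG hx), Real.deriv_log] at h3
  rw [← h1, h3, digamma, one_div, add_comm]

lemma digamma_bounds {x : ℝ} (hx : 0 < x) :
    Real.log x ≤ digamma (x + 1) ∧ digamma (x + 1) ≤ Real.log (x + 1) := by
  have hc := Real.convexOn_log_Gamma
  have hd : digamma (x + 1) = deriv (Real.log ∘ Real.Gamma) (x + 1) := by
    simp only [digamma, Function.comp_def]
  have hmem1 : x ∈ Ioi (0:ℝ) := hx
  have hmem2 : x + 1 ∈ Ioi (0:ℝ) := by simp only [mem_Ioi]; linarith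
  have hmem3 : x + 2 ∈ Ioi (0:ℝ) := by simp only [mem_Ioi]; linarith
  have hdiff : DifferentiableAt ℝ (Real.log ∘ Real.Gamma) (x + 1) := by
    simpa [Function.comp_def] using diffLG (show (0:ℝ) < x + 1 by linarith)
  have hs1 := hc.slope_le_deriv hmem1 hmem2 (by linarith) hdiff
  have hs2 := hc.deriv_le_slope hmem2 hmem3 (by linarith) hdiff
  rw [slope_def_field] at hs1 hs2
  have e1 : (Real.log ∘ Real.Gamma) (x + 1) - (Real.log ∘ Real.Gamma) x = Real.log x := by
    simp only [Function.comp_apply]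
    rw [Real.Gamma_add_one hx.ne', Real.log_mul hx.ne' (Real.Gamma_pos_of_pos hx).ne']
    ring
  have e2 : (Real.log ∘ Real.Gamma) (x + 2) - (Real.log ∘ Real.Gamma) (x + 1) = Real.log (x + 1) := by
    simp only [Function.comp_apply]
    have : x + 2 = (x + 1) + 1 := by ring
    rw [this, Real.Gamma_add_one (by positivity : x + (1:ℝ) ≠ 0),
      Real.log_mul (by positivity : x + (1:ℝ) ≠ 0) (Real.Gamma_pos_of_pos (by linarith)).ne']
    ring
  constructor
  · calc Real.log x = ((Real.log ∘ Real.Gamma) (x+1) - (Real.log ∘ Real.Gamma) x) / (x + 1 - x) := by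
          rw [e1]; norm_num
      _ ≤ _ := by rw [hd]; exact hs1
  · calc digamma (x+1) ≤ ((Real.log ∘ Real.Gamma) (x+2) - (Real.log ∘ Real.Gamma) (x+1)) / (x + 2 - (x+1)) := by
          rw [hd]; exact hs2
      _ = Real.log (x + 1) := by rw [e2]; norm_num

noncomputable def Pf (x : ℝ) : ℝ :=
  1/(24*x^2) - 1/(24*x^3) + 23/(960*x^4) - 1/(160*x^5) - 11/(8064*x^6) - 1/(896*x^7)
noncomputable def Qf (x : ℝ) : ℝ := Pf x + 143/(30720*x^8)
noncomputable def Pd (x : ℝ) : ℝ :=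
  -2/(24*x^3) + 3/(24*x^4) - 92/(960*x^5) + 5/(160*x^6) + 66/(8064*x^7) + 7/(896*x^8)
noncomputable def Qd (x : ℝ) : ℝ := Pd x - 1144/(30720*x^9)

lemma hasDerivAt_term (c d : ℝ) (k : ℕ) (hd : d ≠ 0) (hk : k ≠ 0) {t : ℝ} (ht : t ≠ 0) :
    HasDerivAt (fun x : ℝ => c / (d * x ^ k)) (-(c * k) / (d * t ^ (k+1))) t := by
  obtain ⟨m, rfl⟩ := Nat.exists_eq_succ_of_ne_zero hk
  have h : HasDerivAt (fun x : ℝ => d * x ^ (m+1)) (d * ((m+1) * t ^ m)) t := by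
    simpa using (hasDerivAt_pow (m+1) t).const_mul d
  have h2 := (hasDerivAt_const t c).div h (mul_ne_zero hd (pow_ne_zero _ ht))
  convert h2 using 1
  all_goals try rfl
  field_simp
  simp only [Nat.succ_eq_add_one]
  push_cast
  ring

lemma hasDerivAt_Pf {t : ℝ} (ht : t ≠ 0) : HasDerivAt Pf (Pd t) t := by
  have h1 := hasDerivAt_term 1 24 2 (by norm_num) (by norm_num) ht
  have h2 := hasDerivAt_term 1 24 3 (by norm_num) (by norm_num) ht
  have h3 := hasDerivAt_term 23 960 4 (by norm_num) (by norm_num) ht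
  have h4 := hasDerivAt_term 1 160 5 (by norm_num) (by norm_num) ht
  have h5 := hasDerivAt_term 11 8064 6 (by norm_num) (by norm_num) ht
  have h6 := hasDerivAt_term 1 896 7 (by norm_num) (by norm_num) ht
  have := ((((h1.sub h2).add h3).sub h4).sub h5).sub h6
  convert this using 1
  all_goals try rfl
  unfold Pd
  push_cast
  ring

lemma hasDerivAt_Qf {t : ℝ} (ht : t ≠ 0) : HasDerivAt Qf (Qd t) t := by
  have h7 := hasDerivAt_term 143 30720 8 (by norm_num) (by norm_num) ht
  have := (hasDerivAt_Pf ht).add h7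
  convert this using 1
  all_goals try rfl
  unfold Qd
  push_cast
  ring

noncomputable def gfun (t : ℝ) : ℝ := Real.log (t + 3/2) - Real.log (t + 1/2) - 1/(t+1)

lemma hasDerivAt_gfun {t : ℝ} (ht : 0 < t) :
    HasDerivAt gfun (1/(t+3/2) - 1/(t+1/2) + 1/(t+1)^2) t := by
  have hl1 : HasDerivAt (fun x : ℝ => Real.log (x + 3/2)) (1/(t+3/2)) t := by
    simpa using ((hasDerivAt_id t).add_const (3/2:ℝ)).log (by positivity : t + (3:ℝ)/2 ≠ 0)
  have hl2 : HasDerivAt (fun x : ℝ => Real.log (x + 1/2)) (1/(t+1/2)) t := by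
    simpa using ((hasDerivAt_id t).add_const (1/2:ℝ)).log (by positivity : t + (1:ℝ)/2 ≠ 0)
  have hl3 : HasDerivAt (fun x : ℝ => 1/(x+1)) (-(1/(t+1)^2)) t := by
    have := (((hasDerivAt_id t).add_const (1:ℝ)).inv (by positivity : t + (1:ℝ) ≠ 0))
    simpa [one_div, neg_div, Pi.inv_def] using this
  have := (hl1.sub hl2).sub hl3
  convert this using 1
  all_goals try rfl
  ring

lemma hasDerivAt_shift {f : ℝ → ℝ} {d t : ℝ} (hf : HasDerivAt f d (t+1)) :
    HasDerivAt (fun x => f (x+1)) d t := by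
  simpa [Function.comp_def] using hf.comp t ((hasDerivAt_id t).add_const (1:ℝ))

noncomputable def h₁ (t : ℝ) : ℝ := gfun t - (Pf t - Pf (t+1))
noncomputable def h₂ (t : ℝ) : ℝ := (Qf t - Qf (t+1)) - gfun t

lemma hasDerivAt_h₁ {t : ℝ} (ht : 0 < t) :
    HasDerivAt h₁ ((1/(t+3/2) - 1/(t+1/2) + 1/(t+1)^2) - (Pd t - Pd (t+1))) t :=
  (hasDerivAt_gfun ht).sub ((hasDerivAt_Pf ht.ne').sub
    (hasDerivAt_shift (hasDerivAt_Pf (by positivity))))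

lemma hasDerivAt_h₂ {t : ℝ} (ht : 0 < t) :
    HasDerivAt h₂ ((Qd t - Qd (t+1)) - (1/(t+3/2) - 1/(t+1/2) + 1/(t+1)^2)) t :=
  ((hasDerivAt_Qf ht.ne').sub (hasDerivAt_shift (hasDerivAt_Qf (by positivity)))).sub
    (hasDerivAt_gfun ht)

lemma h₁d_neg {t : ℝ} (ht : 0 < t) :
    (1/(t+3/2) - 1/(t+1/2) + 1/(t+1)^2) - (Pd t - Pd (t+1)) < 0 := by
  have h1 : (0:ℝ) < t + 1 := by linarith
  have key : (1/(t+3/2) - 1/(t+1/2) + 1/(t+1)^2) - (Pd t - Pd (t+1))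
      = -(315*t + 4005*t^2 + 24430*t^3 + 91556*t^4 + 225970*t^5 + 372518*t^6
          + 404152*t^7 + 275828*t^8 + 107058*t^9 + 18018*t^10)
        / (13440*(2*t+3)*(2*t+1)*t^9*(t+1)^9) := by
    unfold Pd
    have e1 : (2:ℝ)*t+3 ≠ 0 := by linarith
    have e2 : (2:ℝ)*t+1 ≠ 0 := by linarith
    have e3 : t + (3:ℝ)/2 ≠ 0 := by linarith
    have e4 : t + (1:ℝ)/2 ≠ 0 := by linarith
    field_simp
    ring
  rw [key]
  apply div_neg_of_neg_of_pos
  · nlinarith [pow_pos ht 2, pow_pos ht 3, pow_pos ht 4, pow_pos ht 5, pow_pos ht 6,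
      pow_pos ht 7, pow_pos ht 8, pow_pos ht 9, pow_pos ht 10]
  · positivity

lemma h₂d_neg {t : ℝ} (ht : 0 < t) :
    (Qd t - Qd (t+1)) - (1/(t+3/2) - 1/(t+1/2) + 1/(t+1)^2) < 0 := by
  have h1 : (0:ℝ) < t + 1 := by linarith
  have key : (Qd t - Qd (t+1)) - (1/(t+3/2) - 1/(t+1/2) + 1/(t+1)^2)
      = -(3003 + 34405*t + 176174*t^2 + 527716*t^3 + 1012082*t^4 + 1271782*t^5
          + 1020728*t^6 + 476980*t^7 + 99995*t^8 + 2100*t^9)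
        / (26880*(2*t+3)*(2*t+1)*t^9*(t+1)^9) := by
    unfold Qd Pd
    have e1 : (2:ℝ)*t+3 ≠ 0 := by linarith
    have e2 : (2:ℝ)*t+1 ≠ 0 := by linarith
    have e3 : t + (3:ℝ)/2 ≠ 0 := by linarith
    have e4 : t + (1:ℝ)/2 ≠ 0 := by linarith
    field_simp
    ring
  rw [key]
  apply div_neg_of_neg_of_pos
  · nlinarith [pow_pos ht 2, pow_pos ht 3, pow_pos ht 4, pow_pos ht 5, pow_pos ht 6,
      pow_pos ht 7, pow_pos ht 8, pow_pos ht 9]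
  · positivity

lemma h₁_anti : StrictAntiOn h₁ (Ioi 0) := by
  apply strictAntiOn_of_deriv_neg (convex_Ioi 0)
  · exact fun t ht => (hasDerivAt_h₁ ht).continuousAt.continuousWithinAt
  · intro t ht
    rw [interior_Ioi] at ht
    rw [(hasDerivAt_h₁ ht).deriv]
    exact h₁d_neg ht

lemma h₂_anti : StrictAntiOn h₂ (Ioi 0) := by
  apply strictAntiOn_of_deriv_neg (convex_Ioi 0)
  · exact fun t ht => (hasDerivAt_h₂ ht).continuousAt.continuousWithinAt
  · intro t ht
    rw [interior_Ioi] at ht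
    rw [(hasDerivAt_h₂ ht).deriv]
    exact h₂d_neg ht

lemma term_tendsto (c d : ℝ) (k : ℕ) (hk : k ≠ 0) (hd : 0 < d) :
    Tendsto (fun x : ℝ => c / (d * x ^ k)) atTop (nhds 0) :=
  Tendsto.div_atTop tendsto_const_nhds ((tendsto_pow_atTop hk).const_mul_atTop hd)

lemma Pf_tendsto : Tendsto Pf atTop (nhds 0) := by
  have h := ((((((term_tendsto 1 24 2 (by norm_num) (by norm_num)).sub
    (term_tendsto 1 24 3 (by norm_num) (by norm_num))).add
    (term_tendsto 23 960 4 (by norm_num) (by norm_num))).sub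
    (term_tendsto 1 160 5 (by norm_num) (by norm_num))).sub
    (term_tendsto 11 8064 6 (by norm_num) (by norm_num))).sub
    (term_tendsto 1 896 7 (by norm_num) (by norm_num)))
  have e : ((((((0:ℝ)-0)+0)-0)-0)-0) = 0 := by norm_num
  rw [← e]
  exact h

lemma Qf_tendsto : Tendsto Qf atTop (nhds 0) := by
  have h := Pf_tendsto.add (term_tendsto 143 30720 8 (by norm_num) (by norm_num))
  have e : ((0:ℝ)+0) = 0 := by norm_num
  rw [← e]
  exact h

lemma shift_tendsto {f : ℝ → ℝ} (hf : Tendsto f atTop (nhds 0)) :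
    Tendsto (fun x => f (x + 1)) atTop (nhds 0) :=
  hf.comp (tendsto_atTop_add_const_right _ 1 tendsto_id)

lemma gfun_tendsto : Tendsto gfun atTop (nhds 0) := by
  have h1 : Tendsto (fun t : ℝ => 1/(t+1)) atTop (nhds 0) :=
    Tendsto.div_atTop tendsto_const_nhds (tendsto_atTop_add_const_right _ 1 tendsto_id)
  have h2 : Tendsto (fun t : ℝ => 1/(t+1/2)) atTop (nhds 0) :=
    Tendsto.div_atTop tendsto_const_nhds (tendsto_atTop_add_const_right _ (1/2) tendsto_id)
  have h3 : Tendsto (fun t : ℝ => 1 + 1/(t+1/2)) atTop (nhds 1) := by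
    simpa using (tendsto_const_nhds (x := (1:ℝ))).add h2
  have h4 : Tendsto (fun t : ℝ => Real.log (1 + 1/(t+1/2))) atTop (nhds 0) := by
    have := (Real.continuousAt_log (x := 1) one_ne_zero).tendsto.comp h3
    simpa [Function.comp_def] using this
  have h5 : Tendsto (fun t : ℝ => Real.log (1 + 1/(t+1/2)) - 1/(t+1)) atTop (nhds 0) := by
    simpa using h4.sub h1
  apply h5.congr'
  filter_upwards [eventually_gt_atTop (0:ℝ)] with t ht
  have e4 : t + (1:ℝ)/2 ≠ 0 := by positivity
  unfold gfun
  rw [show 1 + 1/(t+1/2) = (t+3/2)/(t+1/2) by field_simp; ring,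
    Real.log_div (by positivity) e4]

lemma h₁_tendsto : Tendsto h₁ atTop (nhds 0) := by
  have := gfun_tendsto.sub (Pf_tendsto.sub (shift_tendsto Pf_tendsto))
  have e : ((0:ℝ)-(0-0)) = 0 := by norm_num
  rw [← e]
  exact this

lemma h₂_tendsto : Tendsto h₂ atTop (nhds 0) := by
  have := (Qf_tendsto.sub (shift_tendsto Qf_tendsto)).sub gfun_tendsto
  have e : (((0:ℝ)-0)-0) = 0 := by norm_num
  rw [← e]
  exact this

lemma anti_pos {f : ℝ → ℝ} (hanti : StrictAntiOn f (Ioi 0)) (hlim : Tendsto f atTop (nhds 0))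
    {t : ℝ} (ht : 0 < t) : 0 < f t := by
  have h0 : 0 ≤ f (t + 1) := by
    apply le_of_tendsto hlim
    filter_upwards [eventually_ge_atTop (t+1)] with s hs
    rcases eq_or_lt_of_le hs with h | h
    · rw [h]
    · exact (hanti (by simp only [mem_Ioi]; linarith) (by simp only [mem_Ioi]; linarith) h).le
  have h1 : f (t + 1) < f t := hanti ht (by simp only [mem_Ioi]; linarith) (by linarith)
  linarith

lemma h₁_pos {t : ℝ} (ht : 0 < t) : 0 < h₁ t := anti_pos h₁_anti h₁_tendsto ht
lemma h₂_pos {t : ℝ} (ht : 0 < t) : 0 < h₂ t := anti_pos h₂_anti h₂_tendsto ht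

noncomputable def Ffun (t : ℝ) : ℝ := digamma (t+1) - Real.log (t + 1/2)

lemma Ffun_step {t : ℝ} (ht : 0 < t) : Ffun t - Ffun (t+1) = gfun t := by
  have h : digamma (t+1+1) = digamma (t+1) + 1/(t+1) := digamma_add_one (by linarith)
  unfold Ffun gfun
  rw [h]
  ring

lemma Ffun_bounds {t : ℝ} (ht : 0 < t) : -(1/(2*t)) ≤ Ffun t ∧ Ffun t ≤ 1/(2*t) := by
  obtain ⟨hl, hu⟩ := digamma_bounds ht
  have h12 : (0:ℝ) < t + 1/2 := by linarith
  constructor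
  · have e : Real.log t - Real.log (t+1/2) = -Real.log ((t+1/2)/t) := by
      rw [Real.log_div h12.ne' ht.ne']; ring
    have hb : Real.log ((t+1/2)/t) ≤ (t+1/2)/t - 1 :=
      Real.log_le_sub_one_of_pos (by positivity)
    have e2 : (t+1/2)/t - 1 = 1/(2*t) := by field_simp; ring
    have : -(1/(2*t)) ≤ Real.log t - Real.log (t+1/2) := by
      rw [e]; rw [e2] at hb; linarith
    unfold Ffun; linarith
  · have e : Real.log (t+1) - Real.log (t+1/2) = Real.log ((t+1)/(t+1/2)) := by
      rw [Real.log_div (by linarith : t+(1:ℝ) ≠ 0) h12.ne']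
    have hb : Real.log ((t+1)/(t+1/2)) ≤ (t+1)/(t+1/2) - 1 :=
      Real.log_le_sub_one_of_pos (by positivity)
    have e2 : (t+1)/(t+1/2) - 1 ≤ 1/(2*t) := by
      rw [div_sub_one h12.ne', div_le_div_iff₀ h12 (by positivity)]
      nlinarith
    unfold Ffun; linarith

lemma seq_atTop (x : ℝ) : Tendsto (fun n : ℕ => x + (n:ℝ)) atTop atTop :=
  tendsto_atTop_add_const_left _ x tendsto_natCast_atTop_atTop

lemma Ffun_seq_tendsto {x : ℝ} (hx : 0 < x) :
    Tendsto (fun n : ℕ => Ffun (x + n)) atTop (nhds 0) := by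
  have hpos : ∀ n : ℕ, 0 < x + (n:ℝ) := fun n => by positivity
  have hb : Tendsto (fun n : ℕ => 1/(2*(x + (n:ℝ)))) atTop (nhds 0) :=
    Tendsto.div_atTop tendsto_const_nhds ((seq_atTop x).const_mul_atTop two_pos)
  have hnb : Tendsto (fun n : ℕ => -(1/(2*(x + (n:ℝ))))) atTop (nhds 0) := by
    simpa using hb.neg
  exact tendsto_of_tendsto_of_tendsto_of_le_of_le hnb hb
    (fun n => (Ffun_bounds (hpos n)).1) (fun n => (Ffun_bounds (hpos n)).2)

set_option maxHeartbeats 1000000 in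
lemma tail_nonneg {F G : ℝ → ℝ}
    (hstep : ∀ t : ℝ, 0 < t → G t - G (t+1) < F t - F (t+1))
    {x : ℝ} (hx : 0 < x)
    (hlim : Tendsto (fun n : ℕ => F (x + n) - G (x + n)) atTop (nhds 0)) :
    0 ≤ F x - G x := by
  set D : ℕ → ℝ := fun n => F (x + n) - G (x + n) with hD
  have hmono : ∀ n : ℕ, D (n+1) ≤ D n := by
    intro n
    have hp : (0:ℝ) < x + n := by positivity
    have h := hstep (x + n) hp
    have e : x + ((n:ℝ)+1) = (x + n) + 1 := by ring
    simp only [hD, Nat.cast_add, Nat.cast_one, e]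
    linarith
  have hle : ∀ n : ℕ, D n ≤ D 0 := by
    intro n
    induction n with
    | zero => exact le_refl _
    | succ k ih => exact le_trans (hmono k) ih
  have h0 : (0:ℝ) ≤ D 0 := le_of_tendsto hlim (Eventually.of_forall hle)
  simpa [hD] using h0

set_option maxHeartbeats 1000000 in
lemma Pf_step {t : ℝ} (ht : 0 < t) : Pf t - Pf (t+1) < Ffun t - Ffun (t+1) := by
  have h := h₁_pos ht
  have e := Ffun_step ht
  unfold h₁ at h
  linarith

set_option maxHeartbeats 1000000 in
lemma Qf_step {t : ℝ} (ht : 0 < t) : Ffun t - Ffun (t+1) < Qf t - Qf (t+1) := by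
  have h := h₂_pos ht
  have e := Ffun_step ht
  unfold h₂ at h
  linarith

set_option maxHeartbeats 1000000 in
lemma Ffun_gt_Pf {x : ℝ} (hx : 0 < x) : Pf x < Ffun x := by
  have hx1 : (0:ℝ) < x + 1 := by linarith
  have hlim : Tendsto (fun n : ℕ => Ffun (x + 1 + n) - Pf (x + 1 + n)) atTop (nhds 0) := by
    have h2 : Tendsto (fun n : ℕ => Pf (x + 1 + n)) atTop (nhds 0) :=
      Pf_tendsto.comp (seq_atTop (x+1))
    simpa using (Ffun_seq_tendsto hx1).sub h2
  have htail : 0 ≤ Ffun (x+1) - Pf (x+1) :=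
    tail_nonneg (F := Ffun) (G := Pf) (x := x+1) (fun t ht => Pf_step ht) hx1 hlim
  have h := Pf_step hx
  linarith

set_option maxHeartbeats 1000000 in
lemma Ffun_lt_Qf {x : ℝ} (hx : 0 < x) : Ffun x < Qf x := by
  have hx1 : (0:ℝ) < x + 1 := by linarith
  have hlim : Tendsto (fun n : ℕ => Qf (x + 1 + n) - Ffun (x + 1 + n)) atTop (nhds 0) := by
    have h2 : Tendsto (fun n : ℕ => Qf (x + 1 + n)) atTop (nhds 0) :=
      Qf_tendsto.comp (seq_atTop (x+1))
    simpa using h2.sub (Ffun_seq_tendsto hx1)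
  have htail : 0 ≤ Qf (x+1) - Ffun (x+1) :=
    tail_nonneg (F := Qf) (G := Ffun) (x := x+1) (fun t ht => Qf_step ht) hx1 hlim
  have h := Qf_step hx
  linarith

end Aux

theorem digamma_half_bounds (x : ℝ) (hx : 0 < x) :
    1 / (24 * x ^ 2) - 1 / (24 * x ^ 3) + 23 / (960 * x ^ 4) - 1 / (160 * x ^ 5) -
        11 / (8064 * x ^ 6) - 1 / (896 * x ^ 7) <
      digamma (x + 1) - Real.log (x + 1 / 2) ∧
    digamma (x + 1) - Real.log (x + 1 / 2) <
      1 / (24 * x ^ 2) - 1 / (24 * x ^ 3) + 23 / (960 * x ^ 4) - 1 / (160 * x ^ 5) -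
        11 / (8064 * x ^ 6) - 1 / (896 * x ^ 7) + 143 / (30720 * x ^ 8) := by
  constructor
  · show Pf x < Ffun x
    exact Ffun_gt_Pf hx
  · show Ffun x < Qf x
    exact Ffun_lt_Qf hx
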